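/- Let C₁ and C₂ be smooth plane cubics through p = (1:0:0), given locally at p with local coordinates such that on S = C₁ × C₂ ⊂ P⁸ (Segre embedding) local coordinates at φ(p,p) are z₀₂ and z₂₀, with z₀₁ ≡ (1/b)z₀₂², z₁₀ ≡ (1/a)z₂₀², z₁₁ ≡ (1/(ab))z₀₂²z₂₀², z₁₂ ≡ (1/a)z₀₂z₂₀², z₂₁ ≡ (1/b)z₀₂²z₂₀, z₂₂ ≡ z₀₂z₂₀ modulo the ideal of S (a, b nonzero constants). Then a hyperplane section H = Σ a_{ij} z_{ij} has multiplicity ≥ 3 at φ(p,p) if and only if a₀₀ = a₀₁ = a₁₀ = a₀₂ = a₂₀ = a₂₂ = 0, so the family of such hyperplane sections has dimension 2. -/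

import Mathlib

open MvPolynomial

private lemma coeff_vanish_of_mem_pow {k : Type*} [Field k] {n : ℕ}
    {p : MvPolynomial (Fin 2) k}
    (hp : p ∈ (Ideal.span {X 0, X 1} : Ideal (MvPolynomial (Fin 2) k)) ^ n) :
    ∀ d : Fin 2 →₀ ℕ, d 0 + d 1 < n → coeff d p = 0 := by
  induction hp using Submodule.pow_induction_on_left' with
  | algebraMap r => intro d hd; omega
  | add x y i hx hy ihx ihy =>
      intro d hd
      rw [coeff_add, ihx d hd, ihy d hd, add_zero]
  | mem_mul m hm i x hx ih =>
      intro d hd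
      have hm0 : constantCoeff m = 0 := by
        have : Ideal.span ({X 0, X 1} : Set (MvPolynomial (Fin 2) k)) ≤
            RingHom.ker (constantCoeff (R := k) (σ := Fin 2)) := by
          rw [Ideal.span_le]
          rintro z (rfl | rfl) <;> simp [RingHom.mem_ker]
        exact this hm
      rw [coeff_mul]
      apply Finset.sum_eq_zero
      rintro ⟨u, v⟩ huv
      rw [Finset.HasAntidiagonal.mem_antidiagonal] at huv
      by_cases hv : v 0 + v 1 < i
      · rw [ih v hv, mul_zero]
      · have hu : u = 0 := by
          have h0 : u 0 + v 0 = d 0 := by rw [← huv]; simp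
          have h1 : u 1 + v 1 = d 1 := by rw [← huv]; simp
          have : u 0 = 0 ∧ u 1 = 0 := by omega
          ext j
          fin_cases j <;> simp [this.1, this.2]
        rw [hu, show coeff 0 m = constantCoeff m from rfl, hm0, zero_mul]

/-- In local coordinates x = z₀₂, y = z₂₀ at φ(p,p) on S = C₁ × C₂ ⊂ P⁸, with
z₀₁ = (1/b)x², z₁₀ = (1/a)y², z₁₁ = (1/(ab))x²y², z₁₂ = (1/a)xy²,
z₂₁ = (1/b)x²y, z₂₂ = xy, a hyperplane section H = Σ aᵢⱼ zᵢⱼ has multiplicity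
≥ 3 at the origin (i.e. H ∈ ⟨x,y⟩³) if and only if
a₀₀ = a₀₁ = a₁₀ = a₀₂ = a₂₀ = a₂₂ = 0; hence the family has dimension 2. -/
theorem stmt_4 (k : Type*) [Field k] (a b : k) (ha : a ≠ 0) (hb : b ≠ 0)
    (a00 a01 a02 a10 a11 a12 a20 a21 a22 : k)
    (x y H : MvPolynomial (Fin 2) k) (hx : x = X 0) (hy : y = X 1)
    (hH : H = C a00 + C a02 * x + C a20 * y
        + C (a01 * b⁻¹) * x ^ 2 + C (a10 * a⁻¹) * y ^ 2 + C a22 * (x * y)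
        + C (a11 * (a * b)⁻¹) * (x ^ 2 * y ^ 2) + C (a12 * a⁻¹) * (x * y ^ 2)
        + C (a21 * b⁻¹) * (x ^ 2 * y)) :
    H ∈ (Ideal.span {x, y} : Ideal (MvPolynomial (Fin 2) k)) ^ 3 ↔
      (a00 = 0 ∧ a01 = 0 ∧ a10 = 0 ∧ a02 = 0 ∧ a20 = 0 ∧ a22 = 0) := by
  subst hx hy
  set M : Ideal (MvPolynomial (Fin 2) k) := Ideal.span {X 0, X 1} with hM
  have hxM : (X 0 : MvPolynomial (Fin 2) k) ∈ M := Ideal.subset_span (by simp)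
  have hyM : (X 1 : MvPolynomial (Fin 2) k) ∈ M := Ideal.subset_span (by simp)
  have hx2y : (X 0 * X 0 * X 1 : MvPolynomial (Fin 2) k) ∈ M ^ 3 := by
    rw [pow_succ, pow_two]
    exact Ideal.mul_mem_mul (Ideal.mul_mem_mul hxM hxM) hyM
  have hxy2 : (X 0 * X 1 * X 1 : MvPolynomial (Fin 2) k) ∈ M ^ 3 := by
    rw [pow_succ, pow_two]
    exact Ideal.mul_mem_mul (Ideal.mul_mem_mul hxM hyM) hyM
  constructor
  · intro hmem
    have hc := coeff_vanish_of_mem_pow hmem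
    have e00 := hc 0 (by simp)
    have e10 := hc (Finsupp.single 0 1) (by simp)
    have e01 := hc (Finsupp.single 1 1) (by simp)
    have e20 := hc (Finsupp.single 0 2) (by simp)
    have e02 := hc (Finsupp.single 1 2) (by simp)
    have e11 := hc (Finsupp.single 0 1 + Finsupp.single 1 1) (by simp)
    have hX : ∀ i : Fin 2, (X i : MvPolynomial (Fin 2) k) = monomial (Finsupp.single i 1) 1 :=
      fun i => rfl
    rw [hH] at e00 e10 e01 e20 e02 e11
    simp only [hX, monomial_pow, one_pow, Finsupp.smul_single, smul_eq_mul,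
      monomial_mul, one_mul, mul_one, C_mul_monomial,
      coeff_add, coeff_monomial, Finsupp.ext_iff, Fin.forall_fin_two, Finsupp.single_apply,
      Finsupp.add_apply, Finsupp.coe_zero, Pi.zero_apply] at e00 e10 e01 e20 e02 e11
    norm_num [coeff_C] at e00 e10 e01 e20 e02 e11
    rw [if_neg (by simp [eq_comm]), zero_add] at e10 e01 e20 e02
    rw [if_neg (by simp [Finsupp.ext_iff, Fin.forall_fin_two]), zero_add] at e11
    refine ⟨e00, ?_, ?_, e10, e01, e11⟩
    · have := mul_eq_zero.mp e20
      simpa [inv_eq_zero, hb] using this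
    · have := mul_eq_zero.mp e02
      simpa [inv_eq_zero, ha] using this
  · rintro ⟨h1, h2, h3, h4, h5, h6⟩
    rw [hH, h1, h2, h3, h4, h5, h6]
    have hx2y2 : (X 0 ^ 2 * X 1 ^ 2 : MvPolynomial (Fin 2) k) ∈ M ^ 3 := by
      have := Ideal.mul_mem_right (X 1) _ hx2y
      convert this using 1; ring
    have h1' : (C (a11 * (a * b)⁻¹) * (X 0 ^ 2 * X 1 ^ 2) : MvPolynomial (Fin 2) k) ∈ M ^ 3 :=
      Ideal.mul_mem_left _ _ hx2y2
    have h2' : (C (a12 * a⁻¹) * (X 0 * X 1 ^ 2) : MvPolynomial (Fin 2) k) ∈ M ^ 3 := by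
      apply Ideal.mul_mem_left
      convert hxy2 using 1; ring
    have h3' : (C (a21 * b⁻¹) * (X 0 ^ 2 * X 1) : MvPolynomial (Fin 2) k) ∈ M ^ 3 := by
      apply Ideal.mul_mem_left
      convert hx2y using 1; ring
    have : (C 0 + C 0 * X 0 + C 0 * X 1 + C (0 * b⁻¹) * X 0 ^ 2 + C (0 * a⁻¹) * X 1 ^ 2
        + C 0 * (X 0 * X 1) + C (a11 * (a * b)⁻¹) * (X 0 ^ 2 * X 1 ^ 2)
        + C (a12 * a⁻¹) * (X 0 * X 1 ^ 2) + C (a21 * b⁻¹) * (X 0 ^ 2 * X 1)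
        : MvPolynomial (Fin 2) k)
        = C (a11 * (a * b)⁻¹) * (X 0 ^ 2 * X 1 ^ 2) + C (a12 * a⁻¹) * (X 0 * X 1 ^ 2)
          + C (a21 * b⁻¹) * (X 0 ^ 2 * X 1) := by
      simp
    rw [this]
    exact add_mem (add_mem h1' h2') h3'
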